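/- For simple random walk on ℤ^d with d ≥ 1: the Fourier transform satisfies ∫_{(-π,π]^d} D̂(k)^{2m} dk/(2π)^d = D^{∗2m}(0) ≤ ((2m)!/(2^m m!)) d^{-m} · c for some constant c depending only on m, not on d; in particular ∫ D̂(k)² dk/(2π)^d = 1/(2d). -/

import Mathlib

open MeasureTheory

/-- Convolution on `ℤ^d`. -/
noncomputable def convZd {d : ℕ} (f g : (Fin d → ℤ) → ℝ) (x : Fin d → ℤ) : ℝ :=
  ∑' y : Fin d → ℤ, f y * g (x - y)

/-- The step distribution of simple random walk: `D(x) = (2d)⁻¹ 𝟙{|x|₁=1}`. -/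
noncomputable def stepD (d : ℕ) (x : Fin d → ℤ) : ℝ :=
  if (∑ i, (x i).natAbs) = 1 then 1 / (2 * d) else 0

/-- `m`-fold convolution `D^{∗m}`, with `D^{∗0} = δ₀`. -/
noncomputable def Dconv (d : ℕ) : ℕ → (Fin d → ℤ) → ℝ
  | 0 => fun x => if x = 0 then 1 else 0
  | n + 1 => convZd (stepD d) (Dconv d n)

/-- `D̂(k) = (1/d) ∑_j cos(k_j)`. -/
noncomputable def Dhat (d : ℕ) (k : Fin d → ℝ) : ℝ :=
  (1 / d) * ∑ i, Real.cos (k i)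

namespace RW
variable {d : ℕ}


def sig (d : ℕ) (p : Fin d × Bool) : Fin d → ℤ := Pi.single p.1 (if p.2 then 1 else -1)

lemma sig_valpm (d : ℕ) (p : Fin d × Bool) : sig d p p.1 = 1 ∨ sig d p p.1 = -1 := by
  unfold sig; cases p.2 <;> simp

lemma sig_injective (d : ℕ) : Function.Injective (sig d) := by
  intro p q h
  have h1 : sig d p p.1 = sig d q p.1 := by rw [h]
  rcases p with ⟨i, b⟩; rcases q with ⟨j, c⟩
  unfold sig at h1
  by_cases hij : i = j
  · subst hij
    rw [Pi.single_eq_same, Pi.single_eq_same] at h1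
    cases b <;> cases c <;> simp_all
  · exfalso
    rw [Pi.single_eq_same,
      Pi.single_eq_of_ne (show ((i,b).1 : Fin d) ≠ ((j,c).1) from hij)] at h1
    cases b <;> simp at h1

lemma natAbs_sum_sig (d : ℕ) (p : Fin d × Bool) : (∑ i, (sig d p i).natAbs) = 1 := by
  unfold sig
  rw [Finset.sum_eq_single p.1]
  · cases p.2 <;> simp
  · intro j _ hj; rw [Pi.single_eq_of_ne hj]; simp
  · simp

lemma mem_range_sig {d : ℕ} {y : Fin d → ℤ} (hy : (∑ i, (y i).natAbs) = 1) :
    ∃ p, sig d p = y := by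
  -- find the unique coordinate
  have h1 : ∃ i, (y i).natAbs ≠ 0 := by
    by_contra h
    push_neg at h
    simp [Finset.sum_eq_zero (fun i _ => h i)] at hy
  obtain ⟨i, hi⟩ := h1
  have hle : (y i).natAbs ≤ 1 := hy ▸ Finset.single_le_sum (f := fun i => (y i).natAbs)
    (fun _ _ => Nat.zero_le _) (Finset.mem_univ i)
  have hyi : (y i).natAbs = 1 := by omega
  have hrest : ∀ j, j ≠ i → y j = 0 := by
    intro j hj
    have hsplit : (y i).natAbs + ∑ x ∈ Finset.univ.erase i, (y x).natAbs
        = ∑ x, (y x).natAbs :=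
      Finset.add_sum_erase Finset.univ (fun i => (y i).natAbs) (Finset.mem_univ i)
    have h2 : ∑ x ∈ Finset.univ.erase i, (y x).natAbs = 0 := by omega
    have h3 : (y j).natAbs = 0 := by
      simpa using Finset.sum_eq_zero_iff.mp h2 j (by simp [hj])
    exact Int.natAbs_eq_zero.mp h3
  refine ⟨⟨i, if y i = 1 then true else false⟩, funext fun j => ?_⟩
  unfold sig
  by_cases hji : j = i
  · subst hji
    have : y j = 1 ∨ y j = -1 := by omega
    rcases this with h | h <;> simp [h]
  · rw [Pi.single_eq_of_ne hji, (hrest j hji)]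

lemma stepD_sig (d : ℕ) (p : Fin d × Bool) : stepD d (sig d p) = 1 / (2 * d) := by
  simp [stepD, natAbs_sum_sig]

lemma conv_step {d : ℕ} (g : (Fin d → ℤ) → ℝ) (x : Fin d → ℤ) :
    convZd (stepD d) g x = ∑ p : Fin d × Bool, (1 / (2 * (d:ℝ))) * g (x - sig d p) := by
  unfold convZd
  have h0 : ∀ y ∉ Finset.image (sig d) Finset.univ,
      stepD d y * g (x - y) = 0 := by
    intro y hy
    have : stepD d y = 0 := by
      unfold stepD
      rw [if_neg]
      intro hsum
      obtain ⟨p, hp⟩ := mem_range_sig hsum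
      exact hy (Finset.mem_image.mpr ⟨p, Finset.mem_univ p, hp⟩)
    simp [this]
  rw [tsum_eq_sum h0, Finset.sum_image (fun p _ q _ h => sig_injective d h)]
  refine Finset.sum_congr rfl fun p _ => ?_
  rw [stepD_sig]

def Xs (d n : ℕ) (s : Fin n → Fin d × Bool) : Fin d → ℤ := ∑ j, sig d (s j)

noncomputable def retN (d n : ℕ) (x : Fin d → ℤ) : ℕ :=
  (Finset.univ.filter fun s : Fin n → Fin d × Bool => Xs d n s = x).card

lemma retN_succ (d n : ℕ) (x : Fin d → ℤ) :
    retN d (n + 1) x = ∑ p : Fin d × Bool, retN d n (x - sig d p) := by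
  classical
  unfold retN
  rw [← Fintype.card_subtype]
  have e : {s : Fin (n+1) → Fin d × Bool // Xs d (n+1) s = x} ≃
      Σ p : Fin d × Bool, {t : Fin n → Fin d × Bool // Xs d n t = x - sig d p} := by
    refine Equiv.trans (Equiv.subtypeEquiv (Fin.consEquiv fun _ => Fin d × Bool).symm ?_)
      (Equiv.subtypeProdEquivSigmaSubtype fun p t => Xs d n t = x - sig d p)
    intro s
    have hX : Xs d (n+1) s = sig d (s 0) + Xs d n (Fin.tail s) := by
      unfold Xs Fin.tail
      rw [Fin.sum_univ_succ (f := fun j => sig d (s j))]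
    constructor
    · intro h
      show Xs d n (Fin.tail s) = x - sig d (s 0)
      rw [eq_sub_iff_add_eq, add_comm, ← hX]
      exact h
    · intro h
      have h' : Xs d n (Fin.tail s) = x - sig d (s 0) := h
      rw [eq_sub_iff_add_eq, add_comm] at h'
      rw [hX]
      exact h' 
  rw [Fintype.card_congr e, Fintype.card_sigma]
  exact Finset.sum_congr rfl fun p _ => Fintype.card_subtype _

lemma Dconv_eq (d n : ℕ) (x : Fin d → ℤ) :
    Dconv d n x = (1 / (2 * (d:ℝ))) ^ n * retN d n x := by
  induction n generalizing x with
  | zero =>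
    unfold Dconv retN Xs
    by_cases h : x = 0 <;> simp [h, Finset.filter_eq', eq_comm]
  | succ n ih =>
    show convZd (stepD d) (Dconv d n) x = _
    rw [conv_step, retN_succ]
    push_cast
    rw [Finset.mul_sum]
    exact Finset.sum_congr rfl fun p _ => by rw [ih]; ring

lemma sig_apply (d : ℕ) (p : Fin d × Bool) (i : Fin d) :
    sig d p i = if p.1 = i then (if p.2 then 1 else -1) else 0 := by
  unfold sig
  by_cases h : p.1 = i
  · subst h; simp
  · rw [if_neg h, Pi.single_eq_of_ne (Ne.symm h)]

noncomputable def ephase (d : ℕ) (x : Fin d → ℤ) (k : Fin d → ℝ) : ℂ :=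
  ∏ i, Complex.exp (Complex.I * (x i) * (k i))

def box (d : ℕ) : Set (Fin d → ℝ) := Set.univ.pi fun _ : Fin d => Set.Ioc (-Real.pi) Real.pi

lemma Dhat_complex (hd : 0 < d) (k : Fin d → ℝ) :
    ((Dhat d k : ℝ) : ℂ) = (1 / (2 * d)) *
      ∑ p : Fin d × Bool, Complex.exp (Complex.I * ((if p.2 then (1:ℤ) else -1) : ℤ) * (k p.1)) := by
  have hsum : ∑ p : Fin d × Bool,
      Complex.exp (Complex.I * ((if p.2 then (1:ℤ) else -1) : ℤ) * (k p.1))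
      = ∑ i, 2 * Complex.cos (k i) := by
    rw [Fintype.sum_prod_type]
    refine Finset.sum_congr rfl fun i _ => ?_
    rw [Fintype.sum_bool]
    norm_num
    rw [Complex.cos]
    push_cast
    ring_nf
  rw [hsum, Dhat]
  push_cast
  rw [Finset.mul_sum, Finset.mul_sum]
  refine Finset.sum_congr rfl fun i _ => ?_
  have : ((d:ℂ)) ≠ 0 := Nat.cast_ne_zero.mpr hd.ne'
  field_simp

lemma exp_inner (p : Fin d × Bool) (k : Fin d → ℝ) :
    ∑ i, Complex.I * ((sig d p i : ℤ) : ℂ) * (k i)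
      = Complex.I * ((if p.2 then (1:ℤ) else -1) : ℤ) * (k p.1) := by
  rw [Finset.sum_eq_single p.1]
  · rw [sig_apply, if_pos rfl]
  · intro j _ hj
    rw [sig_apply, if_neg (Ne.symm hj)]
    simp
  · simp

lemma ephase_eq_exp (x : Fin d → ℤ) (k : Fin d → ℝ) :
    ephase d x k = Complex.exp (∑ i, Complex.I * ((x i : ℤ) : ℂ) * (k i)) := by
  rw [ephase, Complex.exp_sum]

lemma Dhat_pow (hd : 0 < d) (n : ℕ) (k : Fin d → ℝ) :
    ((Dhat d k : ℝ) : ℂ) ^ n = (1 / (2 * (d:ℂ))) ^ n *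
      ∑ s : Fin n → Fin d × Bool, ephase d (Xs d n s) k := by
  rw [Dhat_complex hd, mul_pow, Finset.sum_pow', Fintype.piFinset_univ]
  congr 1
  refine Finset.sum_congr rfl fun s _ => ?_
  rw [ephase_eq_exp, ← Complex.exp_sum]
  congr 1
  have hswap : ∑ i, Complex.I * ((Xs d n s i : ℤ) : ℂ) * (k i)
      = ∑ j, ∑ i, Complex.I * ((sig d (s j) i : ℤ) : ℂ) * (k i) := by
    rw [Finset.sum_comm]
    refine Finset.sum_congr rfl fun i _ => ?_
    have : ((Xs d n s i : ℤ) : ℂ) = ∑ j, ((sig d (s j) i : ℤ) : ℂ) := by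
      unfold Xs
      push_cast [Finset.sum_apply]
      try rfl
    rw [this, Finset.mul_sum, Finset.sum_mul]
    try exact Finset.sum_congr rfl fun j _ => by ring
  rw [hswap]
  exact Finset.sum_congr rfl fun j _ => (exp_inner (s j) k).symm

lemma int1d (a : ℤ) :
    (∫ t in Set.Ioc (-Real.pi) Real.pi, Complex.exp (Complex.I * (a : ℂ) * (t : ℝ)))
      = if a = 0 then (2 * Real.pi : ℂ) else 0 := by
  have hle : (-Real.pi) ≤ Real.pi := by linarith [Real.pi_pos]
  rw [← intervalIntegral.integral_of_le hle]
  by_cases ha : a = 0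
  · subst ha
    simp only [Int.cast_zero, mul_zero, zero_mul, Complex.exp_zero, if_pos rfl]
    rw [intervalIntegral.integral_const]
    push_cast [Complex.real_smul]
    ring
  · rw [if_neg ha]
    have hc : Complex.I * (a : ℂ) ≠ 0 :=
      mul_ne_zero Complex.I_ne_zero (Int.cast_ne_zero.mpr ha)
    rw [integral_exp_mul_complex hc]
    have hsin : Complex.sin ((a : ℂ) * (Real.pi : ℂ)) = 0 := by
      have := Real.sin_int_mul_pi a
      have h2 : ((Real.sin ((a : ℝ) * Real.pi) : ℝ) : ℂ) = Complex.sin ((a:ℂ) * (Real.pi:ℂ)) := by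
        push_cast [Complex.ofReal_sin]
        norm_num
      rw [this] at h2
      exact_mod_cast h2.symm
    have h1 : Complex.I * (a:ℂ) * (Real.pi : ℂ) = ((a:ℂ) * (Real.pi:ℂ)) * Complex.I := by ring
    have h2 : Complex.I * (a:ℂ) * ((-Real.pi : ℝ) : ℂ) = (-((a:ℂ) * (Real.pi:ℂ))) * Complex.I := by
      push_cast; ring
    rw [h1, h2, Complex.exp_mul_I, Complex.exp_mul_I, Complex.sin_neg, Complex.cos_neg, hsin]
    simp

lemma ephase_cont (x : Fin d → ℤ) : Continuous (fun k => ephase d x k) := by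
  unfold ephase
  refine continuous_finset_prod _ fun i _ => Complex.continuous_exp.comp ?_
  exact (continuous_const.mul (Complex.continuous_ofReal.comp (continuous_apply i)))

lemma box_measurable : MeasurableSet (box d) :=
  MeasurableSet.univ_pi fun _ => measurableSet_Ioc

lemma ephase_integrableOn (x : Fin d → ℤ) : IntegrableOn (fun k => ephase d x k) (box d) := by
  refine IntegrableOn.mono_set (s := box d)
    (t := Set.univ.pi fun _ : Fin d => Set.Icc (-Real.pi) Real.pi) ?_ ?_
  · exact ContinuousOn.integrableOn_compact
      (isCompact_univ_pi fun _ => isCompact_Icc) (ephase_cont x).continuousOn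
  · exact Set.pi_mono fun i _ => Set.Ioc_subset_Icc_self

lemma integral_ephase (x : Fin d → ℤ) :
    (∫ k in box d, ephase d x k) = if x = 0 then ((2 * Real.pi : ℝ) : ℂ) ^ d else 0 := by
  have hfact : ∀ k : Fin d → ℝ, (box d).indicator (fun k => ephase d x k) k
      = ∏ i, (Set.Ioc (-Real.pi) Real.pi).indicator
          (fun t : ℝ => Complex.exp (Complex.I * (x i : ℂ) * t)) (k i) := by
    intro k
    by_cases hk : k ∈ box d
    · rw [Set.indicator_of_mem hk]
      have : ∀ i, k i ∈ Set.Ioc (-Real.pi) Real.pi := fun i => hk i (Set.mem_univ i)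
      rw [ephase]
      exact Finset.prod_congr rfl fun i _ => (Set.indicator_of_mem (this i) (fun t : ℝ => Complex.exp (Complex.I * (x i : ℂ) * t))).symm
    · rw [Set.indicator_of_notMem hk]
      have : ∃ i, k i ∉ Set.Ioc (-Real.pi) Real.pi := by
        by_contra h
        push_neg at h
        exact hk fun i _ => h i
      obtain ⟨i, hi⟩ := this
      symm
      exact Finset.prod_eq_zero (Finset.mem_univ i) (Set.indicator_of_notMem hi _)
  rw [← integral_indicator box_measurable]
  calc (∫ k, (box d).indicator (fun k => ephase d x k) k)
      = ∫ k : Fin d → ℝ, ∏ i, (Set.Ioc (-Real.pi) Real.pi).indicator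
          (fun t : ℝ => Complex.exp (Complex.I * (x i : ℂ) * t)) (k i) := by
        exact integral_congr_ae (Filter.Eventually.of_forall hfact)
    _ = ∏ i, ∫ t : ℝ, (Set.Ioc (-Real.pi) Real.pi).indicator
          (fun t : ℝ => Complex.exp (Complex.I * (x i : ℂ) * t)) t :=
        MeasureTheory.integral_fintype_prod_eq_prod _
    _ = ∏ i, (if x i = 0 then (2 * Real.pi : ℂ) else 0) := by
        refine Finset.prod_congr rfl fun i _ => ?_
        rw [integral_indicator measurableSet_Ioc]
        exact int1d (x i)
    _ = if x = 0 then ((2 * Real.pi : ℝ) : ℂ) ^ d else 0 := by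
        by_cases hx : x = 0
        · rw [if_pos hx]
          subst hx
          push_cast
          simp
        · rw [if_neg hx]
          have : ∃ i, x i ≠ 0 := by
            by_contra h
            push_neg at h
            exact hx (funext h)
          obtain ⟨i, hi⟩ := this
          exact Finset.prod_eq_zero (Finset.mem_univ i) (if_neg hi)

lemma integral_Dhat_pow (hd : 0 < d) (n : ℕ) :
    (∫ k in box d, Dhat d k ^ n)
      = (2 * Real.pi) ^ d * ((1 / (2 * (d:ℝ))) ^ n * retN d n 0) := by
  have hcast : (∫ k in box d, ((Dhat d k ^ n : ℝ) : ℂ)) = ((∫ k in box d, Dhat d k ^ n : ℝ) : ℂ) :=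
    integral_ofReal
  have key : ((∫ k in box d, Dhat d k ^ n : ℝ) : ℂ)
      = ((2 * Real.pi : ℝ) : ℂ) ^ d * ((1 / (2 * (d:ℂ))) ^ n * (retN d n 0 : ℂ)) := by
    rw [← hcast]
    have h1 : ∀ k : Fin d → ℝ, ((Dhat d k ^ n : ℝ) : ℂ)
        = (1 / (2 * (d:ℂ))) ^ n * ∑ s : Fin n → Fin d × Bool, ephase d (Xs d n s) k := by
      intro k
      push_cast
      exact Dhat_pow hd n k
    rw [integral_congr_ae (Filter.Eventually.of_forall fun k => h1 k)]
    rw [integral_const_mul]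
    rw [integral_finset_sum _ (fun s _ => (ephase_integrableOn (Xs d n s)))]
    have h2 : ∑ s : Fin n → Fin d × Bool, (∫ k in box d, ephase d (Xs d n s) k)
        = (retN d n 0 : ℂ) * ((2 * Real.pi : ℝ) : ℂ) ^ d := by
      rw [Finset.sum_congr rfl fun s _ => integral_ephase (Xs d n s)]
      rw [Finset.sum_ite, Finset.sum_const, Finset.sum_const_zero, add_zero, retN]
      push_cast [smul_eq_mul]
      ring
    rw [h2]
    ring
  have := key
  rw [show ((2 * Real.pi : ℝ) : ℂ) ^ d * ((1 / (2 * (d:ℂ))) ^ n * (retN d n 0 : ℂ))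
      = (((2 * Real.pi) ^ d * ((1 / (2 * (d:ℝ))) ^ n * retN d n 0) : ℝ) : ℂ) by push_cast; ring] at this
  exact_mod_cast this

lemma image_card_le {m : ℕ} (s : Fin (2*m) → Fin d × Bool)
    (hs : Xs d (2*m) s = 0) :
    (Finset.image (fun j => (s j).1) Finset.univ).card ≤ m := by
  classical
  set T := Finset.image (fun j => (s j).1) Finset.univ with hT
  have hfib : ∀ i ∈ T, 2 ≤ (Finset.univ.filter fun j => (s j).1 = i).card := by
    intro i hi
    set F := Finset.univ.filter fun j => (s j).1 = i with hF
    have hne : F.Nonempty := by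
      obtain ⟨j, _, hj⟩ := Finset.mem_image.mp hi
      exact ⟨j, by simp [hF, hj]⟩
    have hsum : ∑ j ∈ F, (if (s j).2 then (1:ℤ) else -1) = 0 := by
      have h0 : (0:ℤ) = ∑ j, sig d (s j) i := by
        have := congrFun hs i
        simpa [Xs, Finset.sum_apply] using this.symm
      rw [h0, hF, Finset.sum_filter]
      exact Finset.sum_congr rfl fun j _ => by rw [sig_apply]
    have hcne : F.card ≠ 1 := by
      intro h1
      obtain ⟨j0, hj0⟩ := Finset.card_eq_one.mp h1
      rw [hj0, Finset.sum_singleton] at hsum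
      cases h2 : (s j0).2 <;> rw [h2] at hsum <;> simp at hsum
    have hc0 : F.card ≠ 0 := Finset.card_ne_zero_of_mem hne.choose_spec
    omega
  have htot : ∑ i ∈ T, (Finset.univ.filter fun j => (s j).1 = i).card = 2*m := by
    rw [hT, ← Finset.card_eq_sum_card_image]
    simp
  have := Finset.card_nsmul_le_sum T _ 2 hfib
  rw [htot] at this
  simp only [smul_eq_mul] at this
  omega

lemma retN_le (d m : ℕ) (hd : 1 ≤ d) :
    retN d (2*m) 0 ≤ (m+1) * (2*m)^(2*m) * d^m := by
  classical
  set 𝒯 : Finset (Finset (Fin d)) := Finset.univ.filter (fun T => T.card ≤ m) with h𝒯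
  have hsub : (Finset.univ.filter fun s : Fin (2*m) → Fin d × Bool => Xs d (2*m) s = 0)
      ⊆ 𝒯.biUnion (fun T => Fintype.piFinset (fun _ : Fin (2*m) => T ×ˢ (Finset.univ : Finset Bool))) := by
    intro s hsmem
    have hs : Xs d (2*m) s = 0 := (Finset.mem_filter.mp hsmem).2
    refine Finset.mem_biUnion.mpr ⟨Finset.image (fun j => (s j).1) Finset.univ, ?_, ?_⟩
    · exact Finset.mem_filter.mpr ⟨Finset.mem_univ _, image_card_le s hs⟩
    · refine Fintype.mem_piFinset.mpr fun j => ?_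
      refine Finset.mem_product.mpr ⟨?_, Finset.mem_univ _⟩
      exact Finset.mem_image.mpr ⟨j, Finset.mem_univ _, rfl⟩
  have h1 : retN d (2*m) 0 ≤ ∑ T ∈ 𝒯, (2*m)^(2*m) := by
    refine le_trans (le_trans (Finset.card_le_card hsub) (Finset.card_biUnion_le)) ?_
    refine Finset.sum_le_sum fun T hT => ?_
    rw [Fintype.card_piFinset]
    have hTc : T.card ≤ m := (Finset.mem_filter.mp hT).2
    calc ∏ _j : Fin (2*m), (T ×ˢ (Finset.univ : Finset Bool)).card
        = (T.card * 2)^(2*m) := by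
          rw [Finset.prod_const]
          simp [Finset.card_product, Finset.card_univ]
      _ ≤ (2*m)^(2*m) := Nat.pow_le_pow_left (by omega) _
  have h2 : 𝒯.card ≤ (m+1) * d^m := by
    have hsub2 : 𝒯 ⊆ (Finset.range (m+1)).biUnion
        (fun r => Finset.powersetCard r (Finset.univ : Finset (Fin d))) := by
      intro T hT
      refine Finset.mem_biUnion.mpr ⟨T.card, ?_, ?_⟩
      · exact Finset.mem_range.mpr (Nat.lt_succ_of_le (Finset.mem_filter.mp hT).2)
      · exact Finset.mem_powersetCard.mpr ⟨Finset.subset_univ _, rfl⟩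
    calc 𝒯.card ≤ ∑ r ∈ Finset.range (m+1), (Finset.powersetCard r (Finset.univ : Finset (Fin d))).card :=
          le_trans (Finset.card_le_card hsub2) Finset.card_biUnion_le
      _ ≤ ∑ _r ∈ Finset.range (m+1), d^m := by
          refine Finset.sum_le_sum fun r hr => ?_
          rw [Finset.card_powersetCard, Finset.card_univ, Fintype.card_fin]
          exact le_trans (Nat.choose_le_pow d r)
            (Nat.pow_le_pow_right hd (Nat.lt_succ_iff.mp (Finset.mem_range.mp hr)))
      _ = (m+1) * d^m := by rw [Finset.sum_const, Finset.card_range, smul_eq_mul]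
  calc retN d (2*m) 0 ≤ ∑ T ∈ 𝒯, (2*m)^(2*m) := h1
    _ = 𝒯.card * (2*m)^(2*m) := by rw [Finset.sum_const, smul_eq_mul]
    _ ≤ ((m+1) * d^m) * (2*m)^(2*m) := Nat.mul_le_mul_right _ h2
    _ = (m+1) * (2*m)^(2*m) * d^m := by ring

lemma sig_flip (d : ℕ) (p : Fin d × Bool) : sig d (p.1, !p.2) = - sig d p := by
  funext i
  rw [Pi.neg_apply, sig_apply, sig_apply]
  by_cases h : p.1 = i
  · cases hb : p.2 <;> simp [h]
  · simp [h]

lemma retN_zero (x : Fin d → ℤ) : retN d 0 x = if x = 0 then 1 else 0 := by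
  unfold retN Xs
  by_cases h : x = 0
  · rw [if_pos h]
    subst h
    simp
  · rw [if_neg h]
    rw [Finset.card_eq_zero, Finset.filter_eq_empty_iff]
    intro s _
    simpa using Ne.symm (by simpa using h)

lemma retN_two (d : ℕ) : retN d 2 0 = 2 * d := by
  have h2 : retN d 2 0 = ∑ p : Fin d × Bool, retN d 1 (0 - sig d p) := retN_succ d 1 0
  rw [h2]
  have h1 : ∀ p : Fin d × Bool, retN d 1 (0 - sig d p) = 1 := by
    intro p
    rw [retN_succ d 0 _]
    have : ∀ q : Fin d × Bool,
        retN d 0 (0 - sig d p - sig d q) = if q = (p.1, !p.2) then 1 else 0 := by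
      intro q
      rw [retN_zero]
      congr 1
      apply propext
      constructor
      · intro h
        have hq : sig d q = - sig d p := by
          have := sub_eq_zero.mp h
          rw [← this]
          abel
        rw [← sig_flip] at hq
        exact sig_injective d hq
      · intro h
        subst h
        rw [sig_flip]
        abel
    rw [Finset.sum_congr rfl fun q _ => this q, Finset.sum_ite_eq' Finset.univ]
    simp
  rw [Finset.sum_congr rfl fun p _ => h1 p, Finset.sum_const, Finset.card_univ]
  simp [Fintype.card_prod, mul_comm]


end RW

open RW in
/-- `∫_{(-π,π]^d} D̂(k)^{2m} dk/(2π)^d = D^{∗2m}(0) ≤ ((2m)!/(2^m m!)) d^{-m} c` for a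
constant `c = c(m)` independent of `d`; in particular `∫ D̂(k)² dk/(2π)^d = 1/(2d)`. -/
theorem rw_moment_bound (m : ℕ) :
    ∃ c : ℝ, ∀ d : ℕ, 0 < d →
      ((∫ k in (Set.univ.pi fun _ : Fin d => Set.Ioc (-Real.pi) Real.pi),
          Dhat d k ^ (2 * m)) = (2 * Real.pi) ^ d * Dconv d (2 * m) 0
      ∧ Dconv d (2 * m) 0 ≤
          (((2 * m).factorial : ℝ) / (2 ^ m * m.factorial)) * c / d ^ m
      ∧ (∫ k in (Set.univ.pi fun _ : Fin d => Set.Ioc (-Real.pi) Real.pi),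
          Dhat d k ^ 2) = (2 * Real.pi) ^ d * (1 / (2 * d))) := by
  refine ⟨(((m+1) * (2*m)^(2*m) * 2^m * m.factorial : ℕ) : ℝ) / ((2*m).factorial : ℕ),
    fun d hd => ⟨?_, ?_, ?_⟩⟩
  · rw [Dconv_eq]
    exact integral_Dhat_pow hd (2*m)
  · have hA : (((2 * m).factorial : ℝ) / (2 ^ m * m.factorial)) *
        ((((m+1) * (2*m)^(2*m) * 2^m * m.factorial : ℕ) : ℝ) / ((2*m).factorial : ℕ))
        = ((m+1) * (2*m)^(2*m) : ℕ) := by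
      have h1 : ((2*m).factorial : ℝ) ≠ 0 := Nat.cast_ne_zero.mpr (Nat.factorial_ne_zero _)
      have h2 : (m.factorial : ℝ) ≠ 0 := Nat.cast_ne_zero.mpr (Nat.factorial_ne_zero _)
      have h3 : ((2:ℝ))^m ≠ 0 := by positivity
      field_simp
      push_cast
      ring
    rw [Dconv_eq, hA]
    set A : ℝ := (((m+1) * (2*m)^(2*m) : ℕ) : ℝ) with hAdef
    have hdR : (0:ℝ) < d := by exact_mod_cast hd
    have hApos : 0 ≤ A := by positivity
    have hN : ((retN d (2*m) 0 : ℕ) : ℝ) ≤ A * (d:ℝ)^m := by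
      have := retN_le d m hd
      calc ((retN d (2*m) 0 : ℕ) : ℝ) ≤ (((m+1) * (2*m)^(2*m) * d^m : ℕ) : ℝ) := by
            exact_mod_cast this
        _ = A * (d:ℝ)^m := by rw [hAdef]; push_cast; ring
    have hdd : ((d:ℝ))^m * (d:ℝ)^m ≤ (2*(d:ℝ))^(2*m) := by
      rw [← pow_add, show m + m = 2*m by ring]
      exact pow_le_pow_left₀ (le_of_lt hdR) (by linarith) _
    have hpos2 : (0:ℝ) < (2*(d:ℝ))^(2*m) := by positivity
    have key : ((retN d (2*m) 0 : ℕ) : ℝ) * (d:ℝ)^m ≤ A * (2*(d:ℝ))^(2*m) :=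
      calc ((retN d (2*m) 0 : ℕ) : ℝ) * (d:ℝ)^m
          ≤ (A * (d:ℝ)^m) * (d:ℝ)^m := by
            exact mul_le_mul_of_nonneg_right hN (by positivity)
        _ = A * ((d:ℝ)^m * (d:ℝ)^m) := by ring
        _ ≤ A * (2*(d:ℝ))^(2*m) := mul_le_mul_of_nonneg_left hdd hApos
    rw [le_div_iff₀ (by positivity : (0:ℝ) < (d:ℝ)^m)]
    have heq : (1 / (2 * (d:ℝ))) ^ (2*m) * ((retN d (2*m) 0 : ℕ) : ℝ) * (d:ℝ)^m
        = (((retN d (2*m) 0 : ℕ) : ℝ) * (d:ℝ)^m) / (2*(d:ℝ))^(2*m) := by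
      rw [div_pow, one_pow]
      field_simp
    rw [heq, div_le_iff₀ hpos2]
    exact key
  · rw [show (2:ℕ) = 2*1 by rfl] at *
    have h := integral_Dhat_pow hd 2
    rw [retN_two] at h
    rw [show ∫ k in (Set.univ.pi fun _ : Fin d => Set.Ioc (-Real.pi) Real.pi),
        Dhat d k ^ 2 = ∫ k in box d, Dhat d k ^ 2 from rfl, h]
    congr 1
    have hdR : ((d:ℝ)) ≠ 0 := Nat.cast_ne_zero.mpr hd.ne'
    push_cast
    field_simp
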